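/- Let f : ℝⁿ → ℝⁿ be continuous and consider ẋ = f(x). Suppose: (i) Mₑ ⊆ ℝⁿ is closed and forward invariant (every solution with φ(0) ∈ Mₑ satisfies φ(t) ∈ Mₑ for all t in its domain); (ii) Mᵢ ⊆ Mₑ is closed, stable relative to Mₑ, and locally attractive relative to Mₑ (there exists δ₁ > 0 such that every complete solution φ with φ(0) ∈ Mₑ and dist(φ(0), Mᵢ) < δ₁ satisfies dist(φ(t), Mᵢ) → 0); (iii) M∘ ⊆ Mᵢ is compact, stable relative to Mᵢ, and locally attractive relative to Mᵢ (there exists δ₂ > 0 such that every complete solution φ with φ(0) ∈ Mᵢ and dist(φ(0), M∘) < δ₂ satisfies dist(φ(t), M∘) → 0). Then M∘ is asymptotically stable relative to Mₑ: M∘ is stable relative to Mₑ, and there exists δ > 0 such that every complete solution φ with φ(0) ∈ Mₑ and dist(φ(0), M∘) < δ satisfies dist(φ(t), M∘) → 0 as t → ∞. -/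

import Mathlib

open Metric Filter Topology Set

section Helpers

variable {E : Type*} [NormedAddCommGroup E] [NormedSpace ℝ E] [CompleteSpace E]

set_option linter.unusedSectionVars false

/-- Arzelà–Ascoli-type extraction for uniformly Lipschitz functions into a compact set. -/
theorem auxAA {C : NNReal} {K : Set E} (hK : IsCompact K) (g : ℕ → ℝ → E)
    (hg : ∀ k, LipschitzWith C (g k)) (hgK : ∀ k t, g k t ∈ K) :
    ∃ σ : ℕ → ℕ, StrictMono σ ∧ ∃ h : ℝ → E, LipschitzWith C h ∧ (∀ t, h t ∈ K) ∧
      ∀ t : ℝ, Tendsto (fun k => g (σ k) t) atTop (𝓝 (h t)) := by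
  obtain ⟨q, hq⟩ := TopologicalSpace.exists_dense_seq ℝ
  have hcpt : IsCompact {v : ℕ → E | ∀ n, v n ∈ K} := by
    have := isCompact_pi_infinite (fun _ : ℕ => hK)
    simpa [Set.setOf_forall] using this
  obtain ⟨G, -, σ, hσ, hGconv⟩ := hcpt.tendsto_subseq
    (x := fun k => (fun n => g k (q n))) (fun k n => hgK k (q n))
  have hGc : ∀ n : ℕ, Tendsto (fun k => g (σ k) (q n)) atTop (𝓝 (G n)) := by
    intro n
    have := (tendsto_pi_nhds.1 hGconv) n
    simpa [Function.comp] using this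
  have hcauchy : ∀ t : ℝ, CauchySeq (fun k => g (σ k) t) := by
    intro t
    rw [Metric.cauchySeq_iff]
    intro ε hε
    have hd : (0:ℝ) < ε / (4 * ((C:ℝ) + 1)) := by positivity
    obtain ⟨n, hn⟩ := hq.exists_dist_lt t hd
    have hmid := (hGc n).cauchySeq
    rw [Metric.cauchySeq_iff] at hmid
    obtain ⟨N, hN⟩ := hmid (ε/4) (by positivity)
    refine ⟨N, fun m hm l hl => ?_⟩
    have h1 : dist (g (σ m) t) (g (σ m) (q n)) ≤ (C:ℝ) * dist t (q n) :=
      (hg (σ m)).dist_le_mul t (q n)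
    have h3 : dist (g (σ l) (q n)) (g (σ l) t) ≤ (C:ℝ) * dist (q n) t :=
      (hg (σ l)).dist_le_mul (q n) t
    have hc : (C:ℝ) * dist t (q n) ≤ ε / 4 := by
      have h4 : ((C:ℝ)+1) * (ε / (4 * ((C:ℝ) + 1))) = ε/4 := by field_simp
      calc (C:ℝ) * dist t (q n) ≤ ((C:ℝ)+1) * (ε / (4 * ((C:ℝ) + 1))) :=
            mul_le_mul (by linarith) hn.le dist_nonneg (by positivity)
        _ = ε / 4 := h4
    have hc' : (C:ℝ) * dist (q n) t ≤ ε / 4 := by rwa [dist_comm (q n) t]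
    have hmid2 := hN m hm l hl
    calc dist (g (σ m) t) (g (σ l) t)
        ≤ dist (g (σ m) t) (g (σ m) (q n)) + dist (g (σ m) (q n)) (g (σ l) (q n))
          + dist (g (σ l) (q n)) (g (σ l) t) := dist_triangle4 _ _ _ _
      _ < ε := by linarith
  choose h htend using fun t => cauchySeq_tendsto_of_complete (hcauchy t)
  refine ⟨σ, hσ, h, ?_, ?_, htend⟩
  · rw [lipschitzWith_iff_dist_le_mul]
    intro x y
    refine le_of_tendsto ((htend x).dist (htend y)) (Eventually.of_forall fun k => ?_)
    exact (hg (σ k)).dist_le_mul x y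
  · intro t
    exact hK.isClosed.mem_of_tendsto (htend t) (Eventually.of_forall fun k => hgK (σ k) t)

/-- A solution segment satisfies the integral equation. -/
theorem auxSOLdiff {ψ v : ℝ → E} {a : ℝ}
    (hd : ∀ t ∈ Set.Icc (0:ℝ) a, HasDerivWithinAt ψ (v t) (Set.Icc (0:ℝ) a) t)
    (hv : ContinuousOn v (Set.Icc (0:ℝ) a)) :
    ∀ t ∈ Set.Icc (0:ℝ) a, ψ t = ψ 0 + ∫ s in (0:ℝ)..t, v s := by
  rintro t ⟨ht0, hta⟩
  have hsub : Set.Icc (0:ℝ) t ⊆ Set.Icc (0:ℝ) a := Set.Icc_subset_Icc le_rfl hta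
  have hcont : ContinuousOn ψ (Set.Icc (0:ℝ) t) := fun s hs =>
    ((hd s (hsub hs)).continuousWithinAt).mono hsub
  have hder : ∀ s ∈ Set.Ioo (0:ℝ) t, HasDerivWithinAt ψ (v s) (Set.Ioi s) s := by
    intro s hs
    have hmem : Set.Icc (0:ℝ) a ∈ 𝓝 s := by
      have : s ∈ Set.Ioo (0:ℝ) a := ⟨hs.1, lt_of_lt_of_le hs.2 hta⟩
      exact mem_of_superset (isOpen_Ioo.mem_nhds this) Set.Ioo_subset_Icc_self
    exact ((hd s ⟨hs.1.le, hs.2.le.trans hta⟩).hasDerivAt hmem).hasDerivWithinAt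
  have hint : IntervalIntegrable v MeasureTheory.volume 0 t := by
    apply ContinuousOn.intervalIntegrable
    rw [Set.uIcc_of_le ht0]
    exact hv.mono hsub
  have := intervalIntegral.integral_eq_sub_of_hasDeriv_right_of_le ht0 hcont hder hint
  rw [this]; abel

/-- The integral equation implies the derivative property on `[0, L)`. -/
theorem auxSOLint {f : E → E} (hf : Continuous f) {h : ℝ → E} (hh : Continuous h)
    {L : EReal} (hL : 0 < L)
    (heq : ∀ t : ℝ, 0 ≤ t → (t : EReal) < L → h t = h 0 + ∫ s in (0:ℝ)..t, f (h s)) :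
    (0 < L) ∧ ∀ t : ℝ, 0 ≤ t → (t : EReal) < L →
      HasDerivWithinAt h (f (h t)) {s : ℝ | 0 ≤ s ∧ (s : EReal) < L} t := by
  refine ⟨hL, fun t ht0 htL => ?_⟩
  have hG : HasDerivAt (fun u => h 0 + ∫ s in (0:ℝ)..u, f (h s)) (f (h t)) t := by
    have := ((hf.comp hh).integral_hasStrictDerivAt 0 t).hasDerivAt
    simpa using this.const_add (h 0)
  refine (hG.hasDerivWithinAt).congr ?_ (heq t ht0 htL)
  rintro s ⟨hs0, hsL⟩
  exact heq s hs0 hsL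

/-- Limits of solution segments are solutions. -/
theorem auxLIM {f : E → E} (hf : Continuous f) {C : NNReal} {K : Set E} (hK : IsCompact K)
    (χ : ℕ → ℝ → E) (hχL : ∀ k, LipschitzWith C (χ k)) (hχK : ∀ k t, χ k t ∈ K)
    (b : ℕ → ℝ)
    (hbd : ∀ k, ∀ t ∈ Set.Icc (0:ℝ) (b k),
      HasDerivWithinAt (χ k) (f (χ k t)) (Set.Icc (0:ℝ) (b k)) t)
    {L : EReal} (hL : 0 < L)
    (hcov : ∀ t : ℝ, 0 ≤ t → (t : EReal) < L → ∀ᶠ k in atTop, t ≤ b k) :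
    ∃ σ : ℕ → ℕ, StrictMono σ ∧ ∃ h : ℝ → E, LipschitzWith C h ∧ (∀ t, h t ∈ K) ∧
      (∀ t : ℝ, 0 ≤ t → (t : EReal) < L →
        HasDerivWithinAt h (f (h t)) {s : ℝ | 0 ≤ s ∧ (s : EReal) < L} t) ∧
      ∀ t : ℝ, Tendsto (fun k => χ (σ k) t) atTop (𝓝 (h t)) := by
  obtain ⟨σ, hσ, h, hLip, hMem, htend⟩ := auxAA hK χ hχL hχK
  obtain ⟨Cf, hCf⟩ := hK.exists_bound_of_continuousOn hf.continuousOn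
  have heq : ∀ t : ℝ, 0 ≤ t → (t : EReal) < L →
      h t = h 0 + ∫ s in (0:ℝ)..t, f (h s) := by
    intro t ht0 htL
    have hev : ∀ᶠ k in atTop, t ≤ b (σ k) :=
      hσ.tendsto_atTop.eventually (hcov t ht0 htL)
    have heqk : ∀ᶠ k in atTop,
        χ (σ k) t = χ (σ k) 0 + ∫ s in (0:ℝ)..t, f (χ (σ k) s) := by
      filter_upwards [hev] with k hk
      exact auxSOLdiff (hbd (σ k))
        ((hf.comp (hχL (σ k)).continuous).continuousOn) t ⟨ht0, hk⟩
    have hIoc : ∀ g : ℝ → E, (∫ s in (0:ℝ)..t, g s) = ∫ s in Set.Ioc (0:ℝ) t, g s :=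
      fun g => intervalIntegral.integral_of_le ht0
    have hintconv : Tendsto (fun k => ∫ s in (0:ℝ)..t, f (χ (σ k) s)) atTop
        (𝓝 (∫ s in (0:ℝ)..t, f (h s))) := by
      simp only [hIoc]
      apply MeasureTheory.tendsto_integral_of_dominated_convergence (fun _ => Cf)
      · exact fun k => ((hf.comp (hχL (σ k)).continuous).aestronglyMeasurable).restrict
      · exact MeasureTheory.integrableOn_const measure_Ioc_lt_top.ne enorm_ne_top
      · exact fun k => MeasureTheory.ae_of_all _ fun s => hCf _ (hχK (σ k) s)
      · exact MeasureTheory.ae_of_all _ fun s =>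
          (hf.continuousAt.tendsto).comp (htend s)
    have h2 : Tendsto (fun k => χ (σ k) t) atTop
        (𝓝 (h 0 + ∫ s in (0:ℝ)..t, f (h s))) :=
      (((htend 0).add hintconv).congr' (heqk.mono fun k hk => hk.symm))
    exact tendsto_nhds_unique (htend t) h2
  exact ⟨σ, hσ, h, hLip, hMem, (auxSOLint hf hLip.continuous hL heq).2, htend⟩
theorem clampLemma {f : E → E} {T : EReal} {φ : ℝ → E}
    (hsol : ∀ t : ℝ, 0 ≤ t → (t : EReal) < T →
      HasDerivWithinAt φ (f (φ t)) {s : ℝ | 0 ≤ s ∧ (s : EReal) < T} t)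
    {s0 s1 : ℝ} (h0 : 0 ≤ s0) (h01 : s0 ≤ s1) (h1T : (s1 : EReal) < T)
    {K : Set E} {Cf : ℝ} (hCf0 : 0 ≤ Cf) (hfK : ∀ x ∈ K, ‖f x‖ ≤ Cf)
    (hKmem : ∀ t ∈ Icc s0 s1, φ t ∈ K) :
    LipschitzWith Cf.toNNReal (fun t => φ (s0 + min (max t 0) (s1 - s0))) ∧
    (∀ t : ℝ, φ (s0 + min (max t 0) (s1 - s0)) ∈ K) ∧
    ∀ t ∈ Icc (0:ℝ) (s1 - s0), HasDerivWithinAt (fun t => φ (s0 + min (max t 0) (s1 - s0)))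
      (f (φ (s0 + min (max t 0) (s1 - s0)))) (Icc (0:ℝ) (s1 - s0)) t := by
  have hp : ∀ t : ℝ, s0 + min (max t 0) (s1 - s0) ∈ Icc s0 s1 := by
    intro t
    have h1 : (0:ℝ) ≤ min (max t 0) (s1 - s0) := le_min (le_max_right t 0) (by linarith)
    have h2 : min (max t 0) (s1 - s0) ≤ s1 - s0 := min_le_right _ _
    exact ⟨by linarith, by linarith⟩
  have hd0 : ∀ t ∈ Icc s0 s1, HasDerivWithinAt φ (f (φ t)) (Icc s0 s1) t := by
    rintro t ⟨ht0, ht1⟩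
    have htT : (t : EReal) < T := lt_of_le_of_lt (EReal.coe_le_coe_iff.2 ht1) h1T
    refine (hsol t (h0.trans ht0) htT).mono ?_
    rintro s ⟨hs0, hs1⟩
    exact ⟨h0.trans hs0, lt_of_le_of_lt (EReal.coe_le_coe_iff.2 hs1) h1T⟩
  have hsolLip : ∀ x ∈ Icc s0 s1, ∀ y ∈ Icc s0 s1, ‖φ y - φ x‖ ≤ Cf * ‖y - x‖ := by
    intro x hx y hy
    exact (convex_Icc s0 s1).norm_image_sub_le_of_norm_hasDerivWithin_le hd0
      (fun z hz => hfK _ (hKmem z hz)) hx hy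
  have hplip : ∀ x y : ℝ,
      |(s0 + min (max x 0) (s1 - s0)) - (s0 + min (max y 0) (s1 - s0))| ≤ |x - y| := by
    intro x y
    rw [add_sub_add_left_eq_sub]
    calc |min (max x 0) (s1-s0) - min (max y 0) (s1-s0)|
        ≤ max |max x 0 - max y 0| |s1 - s0 - (s1 - s0)| := abs_min_sub_min_le_max ..
      _ ≤ |max x 0 - max y 0| := by simp
      _ ≤ |x - y| := abs_max_sub_max_le_abs ..
  refine ⟨?_, fun t => hKmem _ (hp t), ?_⟩
  · rw [lipschitzWith_iff_dist_le_mul]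
    intro x y
    rw [dist_eq_norm, dist_eq_norm, Real.coe_toNNReal _ hCf0]
    calc ‖φ (s0 + min (max x 0) (s1 - s0)) - φ (s0 + min (max y 0) (s1 - s0))‖
        ≤ Cf * ‖(s0 + min (max x 0) (s1 - s0)) - (s0 + min (max y 0) (s1 - s0))‖ :=
          hsolLip _ (hp y) _ (hp x)
      _ ≤ Cf * ‖x - y‖ := by
          rw [Real.norm_eq_abs, Real.norm_eq_abs]
          exact mul_le_mul_of_nonneg_left (hplip x y) hCf0
  · rintro t ⟨ht0, ht1⟩
    have inner : HasDerivWithinAt (fun u : ℝ => s0 + u) 1 (Icc (0:ℝ) (s1 - s0)) t :=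
      ((hasDerivAt_id t).const_add s0).hasDerivWithinAt
    have outer : HasDerivWithinAt φ (f (φ (s0 + t))) (Icc s0 s1) (s0 + t) :=
      hd0 _ ⟨by linarith, by linarith⟩
    have hmaps : MapsTo (fun u : ℝ => s0 + u) (Icc (0:ℝ) (s1 - s0)) (Icc s0 s1) := by
      rintro u ⟨hu0, hu1⟩
      exact ⟨by simp; linarith, by simp; linarith⟩
    have hcomp := HasDerivWithinAt.scomp t outer inner hmaps
    rw [one_smul] at hcomp
    have hval : φ (s0 + min (max t 0) (s1 - s0)) = (φ ∘ HAdd.hAdd s0) t := by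
      rw [max_eq_left ht0, min_eq_left ht1]; rfl
    refine HasDerivWithinAt.congr_deriv (HasDerivWithinAt.congr hcomp ?_ hval) ?_
    · rintro u ⟨hu0, hu1⟩
      rw [max_eq_left hu0, min_eq_left hu1]; rfl
    · rw [max_eq_left ht0, min_eq_left ht1]


theorem shiftSol {f : E → E} {φ : ℝ → E}
    (hsol : ∀ t : ℝ, 0 ≤ t → (t : EReal) < (⊤:EReal) →
      HasDerivWithinAt φ (f (φ t)) {s : ℝ | 0 ≤ s ∧ (s : EReal) < (⊤:EReal)} t)
    (τ : ℝ) (hτ : 0 ≤ τ) :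
    ∀ t : ℝ, 0 ≤ t → (t : EReal) < (⊤:EReal) →
      HasDerivWithinAt (fun t => φ (τ + max t 0)) (f (φ (τ + max t 0)))
        {s : ℝ | 0 ≤ s ∧ (s : EReal) < (⊤:EReal)} t := by
  have hS : {s : ℝ | 0 ≤ s ∧ (s : EReal) < (⊤:EReal)} = Ici (0:ℝ) := by
    ext s; simp [EReal.coe_lt_top]
  intro t ht0 _
  rw [hS]
  have inner : HasDerivWithinAt (fun u : ℝ => τ + u) 1 (Ici (0:ℝ)) t :=
    ((hasDerivAt_id t).const_add τ).hasDerivWithinAt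
  have outer : HasDerivWithinAt φ (f (φ (τ + t))) (Ici (0:ℝ)) (τ + t) := by
    have := hsol (τ + t) (by linarith) (EReal.coe_lt_top _)
    rwa [hS] at this
  have hmaps : MapsTo (fun u : ℝ => τ + u) (Ici (0:ℝ)) (Ici (0:ℝ)) := by
    intro u hu; simp only [mem_Ici] at *; linarith
  have hcomp := HasDerivWithinAt.scomp t outer inner hmaps
  rw [one_smul] at hcomp
  have hval : φ (τ + max t 0) = (φ ∘ HAdd.hAdd τ) t := by rw [max_eq_left ht0]; rfl
  refine HasDerivWithinAt.congr_deriv (HasDerivWithinAt.congr hcomp ?_ hval) ?_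
  · intro u hu; rw [max_eq_left hu]; rfl
  · rw [max_eq_left ht0]

theorem crossing {u : ℝ → ℝ} {a μ ε' : ℝ} (ha : 0 ≤ a) (hu : ContinuousOn u (Icc 0 a))
    (h0 : u 0 < μ) (hμε : μ < ε') (hae : ε' ≤ u a) :
    ∃ s t', 0 ≤ s ∧ s < t' ∧ t' ≤ a ∧ u s = μ ∧ u t' = ε' ∧
      ∀ x ∈ Icc s t', μ ≤ u x ∧ u x ≤ ε' := by
  -- first crossing of ε'
  set A : Set ℝ := {x | x ∈ Icc 0 a ∧ ε' ≤ u x} with hA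
  have hAclosed : IsClosed A := by
    have : A = Icc 0 a ∩ u ⁻¹' (Ici ε') := by ext x; simp [hA, and_comm]
    rw [this]
    exact ContinuousOn.preimage_isClosed_of_isClosed hu isClosed_Icc isClosed_Ici
  have hAne : A.Nonempty := ⟨a, ⟨⟨ha, le_rfl⟩, hae⟩⟩
  have hAbdd : BddBelow A := ⟨0, fun x hx => hx.1.1⟩
  set t' := sInf A with ht'
  have ht'A : t' ∈ A := hAclosed.csInf_mem hAne hAbdd
  have ht'lt : ∀ x, 0 ≤ x → x < t' → u x < ε' := by
    intro x hx0 hxt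
    by_contra hcon
    have hxa : x ≤ a := le_trans hxt.le ht'A.1.2
    have : x ∈ A := ⟨⟨hx0, hxa⟩, not_lt.1 hcon⟩
    exact absurd (csInf_le hAbdd this) (not_le.2 hxt)
  have ht'pos : 0 < t' := by
    rcases lt_or_eq_of_le ht'A.1.1 with h | h
    · exact h
    · exfalso; rw [← h] at ht'A; linarith [ht'A.2]
  have ht'val : u t' = ε' := by
    refine le_antisymm ?_ ht'A.2
    -- approach from the left
    have hseq : Tendsto (fun n : ℕ => t' * (1 - 1/(n+2))) atTop (𝓝 t') := by
      have h2 : Tendsto (fun n : ℕ => 1/((n:ℝ)+2)) atTop (𝓝 0) := by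
        apply Tendsto.div_atTop tendsto_const_nhds
        exact (tendsto_natCast_atTop_atTop (R := ℝ)).atTop_add tendsto_const_nhds
      have : Tendsto (fun n : ℕ => 1 - 1/((n:ℝ)+2)) atTop (𝓝 1) := by
        simpa using tendsto_const_nhds.sub h2
      simpa using tendsto_const_nhds.mul this
    have hmem : ∀ n : ℕ, t' * (1 - 1/(n+2)) ∈ Icc (0:ℝ) a := by
      intro n
      have h1 : 0 < 1/((n:ℝ)+2) := by positivity
      have h2 : 1/((n:ℝ)+2) ≤ 1 := by
        rw [div_le_one (by positivity)]; linarith [Nat.cast_nonneg (α := ℝ) n]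
      constructor
      · apply mul_nonneg ht'pos.le; linarith
      · calc t' * (1 - 1/((n:ℝ)+2)) ≤ t' * 1 := by
              apply mul_le_mul_of_nonneg_left (by linarith) ht'pos.le
          _ ≤ a := by rw [mul_one]; exact ht'A.1.2
    have hlt : ∀ n : ℕ, u (t' * (1 - 1/(n+2))) < ε' := by
      intro n
      apply ht'lt _ (hmem n).1
      have h1 : 0 < 1/((n:ℝ)+2) := by positivity
      nlinarith
    have hcont : Tendsto (fun n : ℕ => u (t' * (1 - 1/(n+2)))) atTop (𝓝 (u t')) := by
      have hct : ContinuousWithinAt u (Icc 0 a) t' := hu t' ht'A.1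
      exact hct.tendsto.comp (tendsto_nhdsWithin_iff.2 ⟨hseq, Eventually.of_forall hmem⟩)
    exact le_of_tendsto hcont (Eventually.of_forall fun n => (hlt n).le)
  -- last time below μ before t'
  set B : Set ℝ := {x | x ∈ Icc 0 t' ∧ u x ≤ μ} with hB
  have hBclosed : IsClosed B := by
    have : B = Icc 0 t' ∩ u ⁻¹' (Iic μ) := by ext x; simp [hB]
    rw [this]
    exact ContinuousOn.preimage_isClosed_of_isClosed
      (hu.mono (Icc_subset_Icc le_rfl ht'A.1.2)) isClosed_Icc isClosed_Iic
  have hBne : B.Nonempty := ⟨0, ⟨⟨le_rfl, ht'pos.le⟩, h0.le⟩⟩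
  have hBbdd : BddAbove B := ⟨t', fun x hx => hx.1.2⟩
  set s := sSup B with hs
  have hsB : s ∈ B := hBclosed.csSup_mem hBne hBbdd
  have hst' : s < t' := by
    rcases lt_or_eq_of_le hsB.1.2 with h | h
    · exact h
    · exfalso
      have h2 := hsB.2
      rw [h, ht'val] at h2
      linarith
  have hsgt : ∀ x, s < x → x ≤ t' → μ < u x := by
    intro x hsx hxt
    by_contra hcon
    have : x ∈ B := ⟨⟨le_trans hsB.1.1 hsx.le, hxt⟩, not_lt.1 hcon⟩
    exact absurd (le_csSup hBbdd this) (not_le.2 hsx)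
  have hsval : u s = μ := by
    refine le_antisymm hsB.2 ?_
    have hseq : Tendsto (fun n : ℕ => s + (t' - s)/(n+2)) atTop (𝓝 s) := by
      have h2 : Tendsto (fun n : ℕ => (t' - s)/((n:ℝ)+2)) atTop (𝓝 0) := by
        apply Tendsto.div_atTop tendsto_const_nhds
        exact (tendsto_natCast_atTop_atTop (R := ℝ)).atTop_add tendsto_const_nhds
      simpa using tendsto_const_nhds.add h2
    have hmem : ∀ n : ℕ, s + (t' - s)/(n+2) ∈ Icc (0:ℝ) a := by
      intro n
      have h1 : 0 < (t' - s)/((n:ℝ)+2) := by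
        apply div_pos (by linarith) (by positivity)
      have h2 : (t' - s)/((n:ℝ)+2) ≤ t' - s := by
        rw [div_le_iff₀ (by positivity : (0:ℝ) < (n:ℝ)+2)]
        nlinarith [Nat.cast_nonneg (α := ℝ) n]
      constructor
      · linarith [hsB.1.1]
      · linarith [ht'A.1.2]
    have hgt : ∀ n : ℕ, μ < u (s + (t' - s)/(n+2)) := by
      intro n
      have h1 : 0 < (t' - s)/((n:ℝ)+2) := div_pos (by linarith) (by positivity)
      have h2 : (t' - s)/((n:ℝ)+2) ≤ t' - s := by
        rw [div_le_iff₀ (by positivity : (0:ℝ) < (n:ℝ)+2)]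
        nlinarith [Nat.cast_nonneg (α := ℝ) n]
      exact hsgt _ (by linarith) (by linarith)
    have hcont : Tendsto (fun n : ℕ => u (s + (t' - s)/(n+2))) atTop (𝓝 (u s)) := by
      have hct : ContinuousWithinAt u (Icc 0 a) s :=
        hu s ⟨hsB.1.1, le_trans hsB.1.2 ht'A.1.2⟩
      exact hct.tendsto.comp (tendsto_nhdsWithin_iff.2 ⟨hseq, Eventually.of_forall hmem⟩)
    exact ge_of_tendsto hcont (Eventually.of_forall fun n => (hgt n).le)
  refine ⟨s, t', hsB.1.1, hst', ht'A.1.2, hsval, ht'val, ?_⟩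
  rintro x ⟨hsx, hxt⟩
  constructor
  · rcases eq_or_lt_of_le hsx with h | h
    · rw [← h, hsval]
    · exact (hsgt x h hxt).le
  · rcases eq_or_lt_of_le hxt with h | h
    · rw [h, ht'val]
    · exact (ht'lt x (le_trans hsB.1.1 hsx) h).le

/-- Compactness of a closed `r`-neighborhood of a compact set (in a proper space). -/
theorem auxNbhdCompact [ProperSpace E] {Mo : Set E} (hMo : IsCompact Mo)
    (hne : Mo.Nonempty) {r : ℝ} (hr : 0 < r) :
    IsCompact {x : E | infDist x Mo ≤ r} := by
  apply isCompact_of_isClosed_isBounded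
  · exact IsClosed.preimage (continuous_infDist_pt Mo) isClosed_Iic
  · obtain ⟨R, hR⟩ := hMo.isBounded.subset_closedBall 0
    rw [Metric.isBounded_iff_subset_closedBall 0]
    refine ⟨R + r + 1, fun x hx => ?_⟩
    obtain ⟨y, hy, hxy⟩ := (Metric.infDist_lt_iff hne).1 (lt_of_le_of_lt hx (lt_add_one r))
    have h1 : dist x 0 ≤ dist x y + dist y 0 := dist_triangle _ _ _
    have h2 : dist y 0 ≤ R := hR hy
    rw [Metric.mem_closedBall]
    linarith

/-- A sequence increasing to `L` from the left. -/
theorem auxSeqLT {L : ℝ} (hL : 0 < L) :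
    (∀ n : ℕ, 0 ≤ L * (1 - 1/(n+2)) ∧ L * (1 - 1/(n+2)) < L) ∧
      Tendsto (fun n : ℕ => L * (1 - 1/(n+2))) atTop (𝓝 L) := by
  constructor
  · intro n
    have h1 : 0 < 1/((n:ℝ)+2) := by positivity
    have h2 : 1/((n:ℝ)+2) ≤ 1 := by
      rw [div_le_one (by positivity)]; linarith [Nat.cast_nonneg (α := ℝ) n]
    constructor
    · apply mul_nonneg hL.le; linarith
    · nlinarith
  · have h2 : Tendsto (fun n : ℕ => 1/((n:ℝ)+2)) atTop (𝓝 0) := by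
      apply Tendsto.div_atTop tendsto_const_nhds
      exact (tendsto_natCast_atTop_atTop (R := ℝ)).atTop_add tendsto_const_nhds
    have h3 : Tendsto (fun n : ℕ => 1 - 1/((n:ℝ)+2)) atTop (𝓝 1) := by
      simpa using tendsto_const_nhds.sub h2
    simpa using tendsto_const_nhds.mul h3

/-- Continuity of a solution on a compact time interval. -/
theorem auxSolContOn {f : E → E} {T : EReal} {φ : ℝ → E}
    (hsol : ∀ t : ℝ, 0 ≤ t → (t : EReal) < T →
      HasDerivWithinAt φ (f (φ t)) {s : ℝ | 0 ≤ s ∧ (s : EReal) < T} t)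
    {a : ℝ} (haT : (a : EReal) < T) : ContinuousOn φ (Icc 0 a) := by
  intro x hx
  have hd := hsol x hx.1 (lt_of_le_of_lt (EReal.coe_le_coe_iff.2 hx.2) haT)
  exact hd.continuousWithinAt.mono
    (fun s hs => ⟨hs.1, lt_of_le_of_lt (EReal.coe_le_coe_iff.2 hs.2) haT⟩)

end Helpers





open Metric Filter Topology

/-- `φ : ℝ → ℝⁿ` restricted to `[0, T)` (with `0 < T ≤ ∞`) is a solution of `ẋ = f x`. -/
def IsSolution {d : ℕ} (f : EuclideanSpace ℝ (Fin d) → EuclideanSpace ℝ (Fin d))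
    (T : EReal) (φ : ℝ → EuclideanSpace ℝ (Fin d)) : Prop :=
  0 < T ∧ ∀ t : ℝ, 0 ≤ t → (t : EReal) < T →
    HasDerivWithinAt φ (f (φ t)) {s : ℝ | 0 ≤ s ∧ (s : EReal) < T} t

/-- `Y` is forward invariant for `ẋ = f x`. -/
def FwdInvariant {d : ℕ} (f : EuclideanSpace ℝ (Fin d) → EuclideanSpace ℝ (Fin d))
    (Y : Set (EuclideanSpace ℝ (Fin d))) : Prop :=
  ∀ (T : EReal) (φ : ℝ → EuclideanSpace ℝ (Fin d)), IsSolution f T φ → φ 0 ∈ Y →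
    ∀ t : ℝ, 0 ≤ t → (t : EReal) < T → φ t ∈ Y

/-- `X` is stable relative to `Y` for `ẋ = f x`. -/
def StableRelCT {d : ℕ} (f : EuclideanSpace ℝ (Fin d) → EuclideanSpace ℝ (Fin d))
    (Y X : Set (EuclideanSpace ℝ (Fin d))) : Prop :=
  ∀ ε > (0 : ℝ), ∀ Δ > (0 : ℝ), ∃ δ > (0 : ℝ),
    ∀ (T : EReal) (φ : ℝ → EuclideanSpace ℝ (Fin d)), IsSolution f T φ → φ 0 ∈ Y →
      infDist (φ 0) X < δ → ‖φ 0‖ < Δ →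
        ∀ t : ℝ, 0 ≤ t → (t : EReal) < T → infDist (φ t) X < ε

/-- `X` is globally attractive relative to `Y` for `ẋ = f x`. -/
def GloballyAttractiveRelCT {d : ℕ}
    (f : EuclideanSpace ℝ (Fin d) → EuclideanSpace ℝ (Fin d))
    (Y X : Set (EuclideanSpace ℝ (Fin d))) : Prop :=
  ∀ φ : ℝ → EuclideanSpace ℝ (Fin d), IsSolution f ⊤ φ → φ 0 ∈ Y →
    Tendsto (fun t : ℝ => infDist (φ t) X) atTop (𝓝 0)

theorem hierarchical_local_asymptotic_stability_ct {d : ℕ}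
    (f : EuclideanSpace ℝ (Fin d) → EuclideanSpace ℝ (Fin d)) (hf : Continuous f)
    (Me Mi Mo : Set (EuclideanSpace ℝ (Fin d)))
    (hMeClosed : IsClosed Me) (hMeInv : FwdInvariant f Me)
    (hMiSub : Mi ⊆ Me) (hMiClosed : IsClosed Mi)
    (hMiStable : StableRelCT f Me Mi)
    (hMiAttr : ∃ δ₁ > (0 : ℝ), ∀ φ : ℝ → EuclideanSpace ℝ (Fin d), IsSolution f ⊤ φ →
      φ 0 ∈ Me → infDist (φ 0) Mi < δ₁ →
        Tendsto (fun t : ℝ => infDist (φ t) Mi) atTop (𝓝 0))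
    (hMoSub : Mo ⊆ Mi) (hMoCompact : IsCompact Mo)
    (hMoStable : StableRelCT f Mi Mo)
    (hMoAttr : ∃ δ₂ > (0 : ℝ), ∀ φ : ℝ → EuclideanSpace ℝ (Fin d), IsSolution f ⊤ φ →
      φ 0 ∈ Mi → infDist (φ 0) Mo < δ₂ →
        Tendsto (fun t : ℝ => infDist (φ t) Mo) atTop (𝓝 0)) :
    StableRelCT f Me Mo ∧
      ∃ δ > (0 : ℝ), ∀ φ : ℝ → EuclideanSpace ℝ (Fin d), IsSolution f ⊤ φ →
        φ 0 ∈ Me → infDist (φ 0) Mo < δ →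
          Tendsto (fun t : ℝ => infDist (φ t) Mo) atTop (𝓝 0) := by
  classical
  obtain ⟨δ₁, hδ₁pos, hMiA⟩ := hMiAttr
  obtain ⟨δ₂, hδ₂pos, hMoA⟩ := hMoAttr
  rcases Set.eq_empty_or_nonempty Mo with hMoE | hMoNE
  · constructor
    · intro ε hε Δ hΔ
      refine ⟨1, one_pos, fun T φ _ _ _ _ t _ _ => ?_⟩
      simpa [hMoE, Metric.infDist_empty] using hε
    · refine ⟨1, one_pos, fun φ _ _ _ => ?_⟩
      simp only [hMoE, Metric.infDist_empty]
      exact tendsto_const_nhds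
  have hMiNE : Mi.Nonempty := hMoNE.mono hMoSub
  -- STABILITY PART
  have stab : StableRelCT f Me Mo := by
    intro ε hε Δ hΔ
    by_contra hcon
    push_neg at hcon
    set ε' : ℝ := min ε δ₂ / 2 with hε'def
    have hε'pos : 0 < ε' := half_pos (lt_min hε hδ₂pos)
    have hε'ε : ε' ≤ ε := by
      have := min_le_left ε δ₂; rw [hε'def]; linarith
    have hε'δ₂ : 2 * ε' ≤ δ₂ := by
      have := min_le_right ε δ₂; rw [hε'def]; linarith
    set K : Set (EuclideanSpace ℝ (Fin d)) := {x | infDist x Mo ≤ ε'} with hKdef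
    have hKcomp : IsCompact K := auxNbhdCompact hMoCompact hMoNE hε'pos
    obtain ⟨Cf0, hCf0⟩ := hKcomp.exists_bound_of_continuousOn hf.continuousOn
    set Cf : ℝ := max Cf0 1 with hCfdef
    have hCfpos : 0 < Cf := lt_of_lt_of_le one_pos (le_max_right _ _)
    have hCf : ∀ x ∈ K, ‖f x‖ ≤ Cf := fun x hx => (hCf0 x hx).trans (le_max_left _ _)
    obtain ⟨RK, hRK⟩ := hKcomp.exists_bound_of_continuousOn (continuous_id).continuousOn
    have hRKpos : 0 ≤ RK := by
      obtain ⟨x0, hx0⟩ := hMoNE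
      have hx0K : x0 ∈ K := by
        simp only [hKdef, Set.mem_setOf_eq, infDist_zero_of_mem hx0]
        exact hε'pos.le
      exact le_trans (norm_nonneg x0) (hRK x0 hx0K)
    set Δ' : ℝ := RK + 1 with hΔ'def
    have hΔ'pos : 0 < Δ' := by rw [hΔ'def]; linarith
    obtain ⟨δs, hδspos, hδstar⟩ := hMoStable (ε'/2) (by positivity) Δ' hΔ'pos
    set μ : ℝ := min δs ε' / 2 with hμdef
    have hμpos : 0 < μ := half_pos (lt_min hδspos hε'pos)
    have hμδs : μ < δs := by
      have h1 : μ ≤ δs / 2 := by rw [hμdef]; linarith [min_le_left δs ε']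
      linarith
    have hμε' : 2 * μ ≤ ε' := by
      rw [hμdef]; linarith [min_le_right δs ε']
    have hbad : ∀ k : ℕ, ∃ T φ, IsSolution f T φ ∧ φ 0 ∈ Me ∧
        infDist (φ 0) Mo < μ/(k+1) ∧ ‖φ 0‖ < Δ ∧
        ∃ t : ℝ, 0 ≤ t ∧ (t:EReal) < T ∧ ε ≤ infDist (φ t) Mo := by
      intro k
      exact hcon (μ/(k+1)) (by positivity)
    choose T Φ hsol hMe0 hd00 hnrm ttt httt0 htttT htttd using hbad
    have hucont : ∀ k, ContinuousOn (fun x => infDist (Φ k x) Mo) (Set.Icc 0 (ttt k)) :=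
      fun k => (continuous_infDist_pt Mo).comp_continuousOn
        (auxSolContOn (hsol k).2 (htttT k))
    have hcross : ∀ k : ℕ, ∃ s t', 0 ≤ s ∧ s < t' ∧ t' ≤ ttt k ∧
        infDist (Φ k s) Mo = μ ∧ infDist (Φ k t') Mo = ε' ∧
        ∀ x ∈ Set.Icc s t', μ ≤ infDist (Φ k x) Mo ∧ infDist (Φ k x) Mo ≤ ε' := by
      intro k
      apply crossing (httt0 k) (hucont k) ?_ ?_ ?_
      · calc infDist (Φ k 0) Mo < μ/(k+1) := hd00 k
          _ ≤ μ := by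
            apply div_le_self hμpos.le
            have : (0:ℝ) ≤ (k:ℝ) := Nat.cast_nonneg k
            linarith
      · linarith
      · exact hε'ε.trans (htttd k)
    choose ss tt' hss0 hsslt htt'le huss hutt' hbetween using hcross
    have hbpos : ∀ k, 0 < tt' k - ss k := fun k => by linarith [hsslt k]
    have htt'T : ∀ k, ((tt' k : ℝ) : EReal) < T k := fun k =>
      lt_of_le_of_lt (EReal.coe_le_coe_iff.2 (htt'le k)) (htttT k)
    set χ : ℕ → ℝ → EuclideanSpace ℝ (Fin d) :=
      fun k t => Φ k (ss k + min (max t 0) (tt' k - ss k)) with hχdef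
    have hKmem : ∀ k, ∀ t ∈ Set.Icc (ss k) (tt' k), Φ k t ∈ K :=
      fun k t ht => (hbetween k t ht).2
    have hclamp := fun k => clampLemma (hsol k).2 (hss0 k) (hsslt k).le (htt'T k)
      hCfpos.le hCf (hKmem k)
    have hχLip : ∀ k, LipschitzWith Cf.toNNReal (χ k) := fun k => (hclamp k).1
    have hχK : ∀ k t, χ k t ∈ K := fun k t => (hclamp k).2.1 t
    have hχder : ∀ k, ∀ t ∈ Set.Icc (0:ℝ) (tt' k - ss k),
        HasDerivWithinAt (χ k) (f (χ k t)) (Set.Icc (0:ℝ) (tt' k - ss k)) t :=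
      fun k => (hclamp k).2.2
    have hpmem : ∀ k t, ss k + min (max t 0) (tt' k - ss k) ∈ Set.Icc (ss k) (tt' k) := by
      intro k t
      have h1 : (0:ℝ) ≤ min (max t 0) (tt' k - ss k) :=
        le_min (le_max_right t 0) (hbpos k).le
      have h2 : min (max t 0) (tt' k - ss k) ≤ tt' k - ss k := min_le_right _ _
      exact ⟨by linarith, by linarith⟩
    have hχlow : ∀ k t, μ ≤ infDist (χ k t) Mo := fun k t =>
      (hbetween k _ (hpmem k t)).1
    have hχ0 : ∀ k, χ k 0 = Φ k (ss k) := by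
      intro k
      simp only [hχdef, max_self]
      rw [min_eq_left (hbpos k).le, add_zero]
    have hχb : ∀ k, χ k (tt' k - ss k) = Φ k (tt' k) := by
      intro k
      simp only [hχdef]
      rw [max_eq_left (hbpos k).le, min_self]
      congr 1
      ring
    have hMiNear : ∀ ρ : ℝ, 0 < ρ → ∀ᶠ k in atTop, infDist (Φ k (ss k)) Mi < ρ := by
      intro ρ hρ
      obtain ⟨δρ, hδρpos, hδρ⟩ := hMiStable ρ hρ Δ hΔ
      obtain ⟨N, hN⟩ := exists_nat_gt (μ/δρ)
      filter_upwards [eventually_ge_atTop N] with k hk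
      have hssT : ((ss k : ℝ) : EReal) < T k :=
        lt_of_le_of_lt (EReal.coe_le_coe_iff.2 (hsslt k).le) (htt'T k)
      refine hδρ (T k) (Φ k) (hsol k) (hMe0 k) ?_ (hnrm k) (ss k) (hss0 k) hssT
      have hNk : (N:ℝ) + 1 ≤ (k:ℝ) + 1 := by
        have : (N:ℝ) ≤ (k:ℝ) := Nat.cast_le.2 hk
        linarith
      have h1 : μ/((k:ℝ)+1) ≤ μ/((N:ℝ)+1) := by
        gcongr
      have h2 : μ/((N:ℝ)+1) < δρ := by
        rw [div_lt_iff₀ (by positivity)]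
        have hN' : μ < (N:ℝ) * δρ := (div_lt_iff₀ hδρpos).1 hN
        nlinarith [hδρpos]
      calc infDist (Φ k 0) Mi ≤ infDist (Φ k 0) Mo :=
            infDist_le_infDist_of_subset hMoSub hMoNE
        _ < μ/((k:ℝ)+1) := by
            have := hd00 k
            push_cast at this ⊢
            convert this using 2
        _ < δρ := lt_of_le_of_lt h1 h2
    set b : ℕ → ℝ := fun k => tt' k - ss k with hbdef
    have hclow : ∀ k, ε'/(2*Cf) ≤ b k := by
      intro k
      have h2 : infDist (Φ k (tt' k)) Mo ≤ infDist (Φ k (ss k)) Mo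
          + dist (Φ k (tt' k)) (Φ k (ss k)) := infDist_le_infDist_add_dist
      have h3 : dist (Φ k (tt' k)) (Φ k (ss k)) ≤ Cf * (b k) := by
        have hd := (hχLip k).dist_le_mul (b k) 0
        rw [show χ k (b k) = Φ k (tt' k) from hχb k, show χ k 0 = Φ k (ss k) from hχ0 k,
          Real.coe_toNNReal _ hCfpos.le] at hd
        calc dist (Φ k (tt' k)) (Φ k (ss k)) ≤ Cf * dist (b k) 0 := hd
          _ = Cf * (b k) := by
              rw [Real.dist_eq, sub_zero, abs_of_nonneg (hbpos k).le]
      rw [huss k, hutt' k] at h2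
      rw [div_le_iff₀ (by positivity)]
      nlinarith
    by_cases hLb : ∃ M, ∃ᶠ k in atTop, b k ≤ M
    · -- convergent segment-length case
      obtain ⟨M, hfreq⟩ := hLb
      obtain ⟨ψ, hψmono, hψle⟩ := Filter.extraction_of_frequently_atTop hfreq
      obtain ⟨L₀, hL₀mem, θ, hθmono, hLtend⟩ := (isCompact_Icc (a := ε'/(2*Cf))
        (b := M)).tendsto_subseq (x := fun k => b (ψ k))
        (fun k => ⟨hclow (ψ k), hψle k⟩)
      have hψ'mono : StrictMono (fun k => ψ (θ k)) := hψmono.comp hθmono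
      have hL₀pos : 0 < L₀ := lt_of_lt_of_le (by positivity) hL₀mem.1
      have hLtend' : Tendsto (fun k => b (ψ (θ k))) atTop (𝓝 L₀) := hLtend
      have hcov : ∀ t : ℝ, 0 ≤ t → (t : EReal) < ((L₀:ℝ):EReal) →
          ∀ᶠ k in atTop, t ≤ b (ψ (θ k)) := by
        intro t ht0 htL
        have htL' : t < L₀ := EReal.coe_lt_coe_iff.1 htL
        exact (hLtend'.eventually (lt_mem_nhds htL')).mono fun k hk => hk.le
      obtain ⟨σ, hσmono, h, hhLip, hhK, hhder, hconv⟩ := auxLIM hf hKcomp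
        (fun k => χ (ψ (θ k))) (fun k => hχLip _) (fun k t => hχK _ t)
        (fun k => b (ψ (θ k))) (fun k => hχder _)
        (L := ((L₀:ℝ) : EReal)) (EReal.coe_pos.2 hL₀pos) hcov
      set τ : ℕ → ℕ := fun k => ψ (θ (σ k)) with hτdef
      have hτmono : StrictMono τ := hψ'mono.comp hσmono
      have h0conv : Tendsto (fun k => Φ (τ k) (ss (τ k))) atTop (𝓝 (h 0)) := by
        have := hconv 0
        simp only [hχ0] at this
        exact this
      have hh0Mi : h 0 ∈ Mi := by
        rw [hMiClosed.mem_iff_infDist_zero hMiNE]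
        have hle0 : ∀ ρ : ℝ, 0 < ρ → infDist (h 0) Mi ≤ ρ := by
          intro ρ hρ
          have hev : ∀ᶠ k in atTop, infDist (Φ (τ k) (ss (τ k))) Mi < ρ :=
            hτmono.tendsto_atTop.eventually (hMiNear ρ hρ)
          have hlim : Tendsto (fun k => infDist (Φ (τ k) (ss (τ k))) Mi) atTop
              (𝓝 (infDist (h 0) Mi)) :=
            ((continuous_infDist_pt Mi).continuousAt.tendsto).comp h0conv
          exact le_of_tendsto hlim (hev.mono fun k hk => hk.le)
        refine le_antisymm ?_ infDist_nonneg
        by_contra hpos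
        push_neg at hpos
        linarith [hle0 (infDist (h 0) Mi / 2) (by linarith)]
      have hh0Mo : infDist (h 0) Mo = μ := by
        have h1 : Tendsto (fun k => infDist (Φ (τ k) (ss (τ k))) Mo) atTop
            (𝓝 (infDist (h 0) Mo)) :=
          ((continuous_infDist_pt Mo).continuousAt.tendsto).comp h0conv
        have h2 : (fun k => infDist (Φ (τ k) (ss (τ k))) Mo) = fun _ => μ := by
          funext k; exact huss (τ k)
        rw [h2] at h1
        exact tendsto_nhds_unique h1 tendsto_const_nhds
      have hh0n : ‖h 0‖ < Δ' := by
        have := hRK _ (hhK 0)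
        rw [hΔ'def]
        simp only [id_eq] at this
        linarith
      have hsolh : IsSolution f ((L₀:ℝ):EReal) h := ⟨EReal.coe_pos.2 hL₀pos, hhder⟩
      have hstabh := hδstar _ h hsolh hh0Mi (by rw [hh0Mo]; exact hμδs) hh0n
      have hbτ : Tendsto (fun k => b (τ k)) atTop (𝓝 L₀) :=
        hLtend'.comp hσmono.tendsto_atTop
      have hdist0 : Tendsto (fun k => dist (χ (τ k) L₀) (χ (τ k) (b (τ k)))) atTop
          (𝓝 0) := by
        apply squeeze_zero (fun k => dist_nonneg) (g := fun k => Cf * |L₀ - b (τ k)|)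
        · intro k
          have hd := (hχLip (τ k)).dist_le_mul L₀ (b (τ k))
          rw [Real.coe_toNNReal _ hCfpos.le] at hd
          calc dist (χ (τ k) L₀) (χ (τ k) (b (τ k))) ≤ Cf * dist L₀ (b (τ k)) := hd
            _ = Cf * |L₀ - b (τ k)| := by rw [Real.dist_eq]
        · have h1 : Tendsto (fun k => L₀ - b (τ k)) atTop (𝓝 0) := by
            have := tendsto_const_nhds (x := L₀) (f := atTop (α := ℕ)) |>.sub hbτ
            simpa using this
          have h2 : Tendsto (fun k => |L₀ - b (τ k)|) atTop (𝓝 0) := by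
            simpa using h1.abs
          have := tendsto_const_nhds (x := Cf) (f := atTop (α := ℕ)) |>.mul h2
          simpa using this
      have hendconv : Tendsto (fun k => χ (τ k) (b (τ k))) atTop (𝓝 (h L₀)) :=
        (hconv L₀).congr_dist hdist0
      have hhLval : infDist (h L₀) Mo = ε' := by
        have h1 : Tendsto (fun k => infDist (χ (τ k) (b (τ k))) Mo) atTop
            (𝓝 (infDist (h L₀) Mo)) :=
          ((continuous_infDist_pt Mo).continuousAt.tendsto).comp hendconv
        have h2 : (fun k => infDist (χ (τ k) (b (τ k))) Mo) = fun _ => ε' := by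
          funext k
          rw [show χ (τ k) (b (τ k)) = Φ (τ k) (tt' (τ k)) from hχb (τ k)]
          exact hutt' (τ k)
        rw [h2] at h1
        exact tendsto_nhds_unique h1 tendsto_const_nhds
      obtain ⟨hseqmem, hseqtend⟩ := auxSeqLT hL₀pos
      have hlt : ∀ n : ℕ, infDist (h (L₀ * (1 - 1/(n+2)))) Mo < ε'/2 := fun n =>
        hstabh _ (hseqmem n).1 (EReal.coe_lt_coe_iff.2 (hseqmem n).2)
      have hhcont : Tendsto (fun n : ℕ => infDist (h (L₀ * (1 - 1/(n+2)))) Mo) atTop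
          (𝓝 (infDist (h L₀) Mo)) :=
        ((continuous_infDist_pt Mo).continuousAt.tendsto).comp
          ((hhLip.continuous.tendsto L₀).comp hseqtend)
      have hfin := le_of_tendsto hhcont (Eventually.of_forall fun n => (hlt n).le)
      rw [hhLval] at hfin
      linarith
    · -- lengths tend to infinity
      push_neg at hLb
      have hbtop : Tendsto b atTop atTop := by
        rw [Filter.tendsto_atTop]
        intro M
        exact (hLb M).mono fun k hk => hk.le
      have hcov : ∀ t : ℝ, 0 ≤ t → (t : EReal) < (⊤:EReal) →
          ∀ᶠ k in atTop, t ≤ b k := fun t _ _ => hbtop.eventually_ge_atTop t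
      obtain ⟨σ, hσmono, h, hhLip, hhK, hhder, hconv⟩ := auxLIM hf hKcomp χ hχLip hχK
        b hχder (L := (⊤:EReal)) EReal.zero_lt_top hcov
      have h0conv : Tendsto (fun k => Φ (σ k) (ss (σ k))) atTop (𝓝 (h 0)) := by
        have := hconv 0
        simp only [hχ0] at this
        exact this
      have hh0Mi : h 0 ∈ Mi := by
        rw [hMiClosed.mem_iff_infDist_zero hMiNE]
        have hle0 : ∀ ρ : ℝ, 0 < ρ → infDist (h 0) Mi ≤ ρ := by
          intro ρ hρ
          have hev : ∀ᶠ k in atTop, infDist (Φ (σ k) (ss (σ k))) Mi < ρ :=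
            hσmono.tendsto_atTop.eventually (hMiNear ρ hρ)
          have hlim : Tendsto (fun k => infDist (Φ (σ k) (ss (σ k))) Mi) atTop
              (𝓝 (infDist (h 0) Mi)) :=
            ((continuous_infDist_pt Mi).continuousAt.tendsto).comp h0conv
          exact le_of_tendsto hlim (hev.mono fun k hk => hk.le)
        refine le_antisymm ?_ infDist_nonneg
        by_contra hpos
        push_neg at hpos
        linarith [hle0 (infDist (h 0) Mi / 2) (by linarith)]
      have hh0Mo : infDist (h 0) Mo = μ := by
        have h1 : Tendsto (fun k => infDist (Φ (σ k) (ss (σ k))) Mo) atTop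
            (𝓝 (infDist (h 0) Mo)) :=
          ((continuous_infDist_pt Mo).continuousAt.tendsto).comp h0conv
        have h2 : (fun k => infDist (Φ (σ k) (ss (σ k))) Mo) = fun _ => μ := by
          funext k; exact huss (σ k)
        rw [h2] at h1
        exact tendsto_nhds_unique h1 tendsto_const_nhds
      have hsolh : IsSolution f ⊤ h := ⟨EReal.zero_lt_top, hhder⟩
      have hattr := hMoA h hsolh hh0Mi (by rw [hh0Mo]; linarith)
      have hlow : ∀ t : ℝ, μ ≤ infDist (h t) Mo := by
        intro t
        have hlim : Tendsto (fun k => infDist (χ (σ k) t) Mo) atTop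
            (𝓝 (infDist (h t) Mo)) :=
          ((continuous_infDist_pt Mo).continuousAt.tendsto).comp (hconv t)
        exact ge_of_tendsto hlim (Eventually.of_forall fun k => hχlow (σ k) t)
      have hev := hattr.eventually (gt_mem_nhds hμpos)
      obtain ⟨t0, ht0⟩ := hev.exists
      linarith [hlow t0]
  refine ⟨stab, ?_⟩
  -- ATTRACTIVITY PART
  set ε₀ : ℝ := min δ₂ 1 / 2 with hε₀def
  have hε₀pos : 0 < ε₀ := half_pos (lt_min hδ₂pos one_pos)
  have hε₀δ₂ : 2 * ε₀ ≤ δ₂ := by rw [hε₀def]; linarith [min_le_left δ₂ 1]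
  set K₀ : Set (EuclideanSpace ℝ (Fin d)) := {x | infDist x Mo ≤ ε₀} with hK₀def
  have hK₀comp : IsCompact K₀ := auxNbhdCompact hMoCompact hMoNE hε₀pos
  obtain ⟨Cg0, hCg0⟩ := hK₀comp.exists_bound_of_continuousOn hf.continuousOn
  set Cg : ℝ := max Cg0 1 with hCgdef
  have hCgpos : 0 < Cg := lt_of_lt_of_le one_pos (le_max_right _ _)
  have hCg : ∀ x ∈ K₀, ‖f x‖ ≤ Cg := fun x hx => (hCg0 x hx).trans (le_max_left _ _)
  obtain ⟨RK₀, hRK₀⟩ := hK₀comp.exists_bound_of_continuousOn (continuous_id).continuousOn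
  have hRK₀pos : 0 ≤ RK₀ := by
    obtain ⟨x0, hx0⟩ := hMoNE
    have hx0K : x0 ∈ K₀ := by
      simp only [hK₀def, Set.mem_setOf_eq, infDist_zero_of_mem hx0]
      exact hε₀pos.le
    have := hRK₀ x0 hx0K
    simp only [id_eq] at this
    exact le_trans (norm_nonneg x0) this
  set Δ₀ : ℝ := RK₀ + 1 with hΔ₀def
  have hΔ₀pos : 0 < Δ₀ := by rw [hΔ₀def]; linarith
  obtain ⟨δs, hδspos, hδsspec⟩ := stab ε₀ hε₀pos Δ₀ hΔ₀pos
  refine ⟨min (min δs δ₁) ε₀, lt_min (lt_min hδspos hδ₁pos) hε₀pos, ?_⟩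
  intro φ hφsol hφMe hφd
  have hδδs : infDist (φ 0) Mo < δs :=
    lt_of_lt_of_le hφd (le_trans (min_le_left _ _) (min_le_left _ _))
  have hδδ₁ : infDist (φ 0) Mo < δ₁ :=
    lt_of_lt_of_le hφd (le_trans (min_le_left _ _) (min_le_right _ _))
  have hδε₀ : infDist (φ 0) Mo < ε₀ := lt_of_lt_of_le hφd (min_le_right _ _)
  have hφ0K : φ 0 ∈ K₀ := hδε₀.le
  have hφ0n : ‖φ 0‖ < Δ₀ := by
    have := hRK₀ _ hφ0K
    simp only [id_eq] at this
    rw [hΔ₀def]; linarith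
  have hbound : ∀ t : ℝ, 0 ≤ t → infDist (φ t) Mo < ε₀ := fun t ht =>
    hδsspec ⊤ φ hφsol hφMe hδδs hφ0n t ht (EReal.coe_lt_top t)
  have hKmem : ∀ t : ℝ, 0 ≤ t → φ t ∈ K₀ := fun t ht => (hbound t ht).le
  have hMiTend : Tendsto (fun t : ℝ => infDist (φ t) Mi) atTop (𝓝 0) := by
    apply hMiA φ hφsol hφMe
    calc infDist (φ 0) Mi ≤ infDist (φ 0) Mo := infDist_le_infDist_of_subset hMoSub hMoNE
      _ < δ₁ := hδδ₁
  rw [Metric.tendsto_nhds]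
  intro η hη
  obtain ⟨δη, hδηpos, hδηspec⟩ := stab η hη Δ₀ hΔ₀pos
  -- Step 1: some time at which the solution is δη-close to Mo
  have hstep1 : ∃ t0 : ℝ, 0 ≤ t0 ∧ infDist (φ t0) Mo < δη := by
    by_contra hno
    push_neg at hno
    set χ2 : ℕ → ℝ → EuclideanSpace ℝ (Fin d) :=
      fun k t => φ ((k:ℝ) + min (max t 0) (((k:ℝ) + (k:ℝ)) - (k:ℝ))) with hχ2def
    set b2 : ℕ → ℝ := fun k => ((k:ℝ) + (k:ℝ)) - (k:ℝ) with hb2def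
    have hb2k : ∀ k : ℕ, b2 k = (k:ℝ) := fun k => by rw [hb2def]; ring
    have hclamp2 : ∀ k : ℕ, _ := fun k : ℕ =>
      clampLemma (s0 := (k:ℝ)) (s1 := (k:ℝ) + (k:ℝ)) hφsol.2 (Nat.cast_nonneg k)
        (by linarith [Nat.cast_nonneg (α := ℝ) k]) (EReal.coe_lt_top _)
        hCgpos.le hCg
        (fun t ht => hKmem t (le_trans (Nat.cast_nonneg k) ht.1))
    have hχ2Lip : ∀ k, LipschitzWith Cg.toNNReal (χ2 k) := fun k => (hclamp2 k).1
    have hχ2K : ∀ k t, χ2 k t ∈ K₀ := fun k t => (hclamp2 k).2.1 t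
    have hχ2der : ∀ k, ∀ t ∈ Set.Icc (0:ℝ) (b2 k),
        HasDerivWithinAt (χ2 k) (f (χ2 k t)) (Set.Icc (0:ℝ) (b2 k)) t :=
      fun k => (hclamp2 k).2.2
    have hcov2 : ∀ t : ℝ, 0 ≤ t → (t : EReal) < (⊤:EReal) →
        ∀ᶠ k in atTop, t ≤ b2 k := by
      intro t _ _
      have := (tendsto_natCast_atTop_atTop (R := ℝ)).eventually_ge_atTop t
      exact this.mono fun k hk => by rw [hb2k k]; exact hk
    obtain ⟨σ, hσmono, h, hhLip, hhK, hhder, hconv⟩ := auxLIM hf hK₀comp χ2 hχ2Lip hχ2K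
      b2 hχ2der (L := (⊤:EReal)) EReal.zero_lt_top hcov2
    have hχ20 : ∀ k : ℕ, χ2 k 0 = φ (k:ℝ) := by
      intro k
      have h0 : (0:ℝ) ≤ ((k:ℝ) + (k:ℝ)) - (k:ℝ) := by
        have := Nat.cast_nonneg (α := ℝ) k; linarith
      simp only [hχ2def, max_self]
      rw [min_eq_left h0, add_zero]
    have h0conv : Tendsto (fun k => φ ((σ k : ℕ) : ℝ)) atTop (𝓝 (h 0)) := by
      have := hconv 0
      simp only [hχ20] at this
      exact this
    have hh0Mi : h 0 ∈ Mi := by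
      rw [hMiClosed.mem_iff_infDist_zero hMiNE]
      have h1 : Tendsto (fun k => infDist (φ ((σ k : ℕ) : ℝ)) Mi) atTop
          (𝓝 (infDist (h 0) Mi)) :=
        ((continuous_infDist_pt Mi).continuousAt.tendsto).comp h0conv
      have h2 : Tendsto (fun k => infDist (φ ((σ k : ℕ) : ℝ)) Mi) atTop (𝓝 0) :=
        hMiTend.comp ((tendsto_natCast_atTop_atTop (R := ℝ)).comp hσmono.tendsto_atTop)
      exact tendsto_nhds_unique h1 h2
    have hh0δ₂ : infDist (h 0) Mo < δ₂ := by
      have := hhK 0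
      rw [hK₀def] at this
      simp only [Set.mem_setOf_eq] at this
      linarith
    have hattr := hMoA h ⟨EReal.zero_lt_top, hhder⟩ hh0Mi hh0δ₂
    have hlow : ∀ t : ℝ, δη ≤ infDist (h t) Mo := by
      intro t
      have hlim : Tendsto (fun k => infDist (χ2 (σ k) t) Mo) atTop
          (𝓝 (infDist (h t) Mo)) :=
        ((continuous_infDist_pt Mo).continuousAt.tendsto).comp (hconv t)
      refine ge_of_tendsto hlim (Eventually.of_forall fun k => ?_)
      have hpt : (0:ℝ) ≤ (σ k : ℝ) + min (max t 0) (((σ k:ℝ) + (σ k:ℝ)) - (σ k:ℝ)) := by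
        have h1 : (0:ℝ) ≤ min (max t 0) (((σ k:ℝ) + (σ k:ℝ)) - (σ k:ℝ)) :=
          le_min (le_max_right t 0) (by linarith [Nat.cast_nonneg (α := ℝ) (σ k)])
        linarith [Nat.cast_nonneg (α := ℝ) (σ k)]
      exact hno _ hpt
    have hev := hattr.eventually (gt_mem_nhds hδηpos)
    obtain ⟨t0, ht0⟩ := hev.exists
    linarith [hlow t0]
  obtain ⟨t0, ht00, ht0d⟩ := hstep1
  set ψ : ℝ → EuclideanSpace ℝ (Fin d) := fun t => φ (t0 + max t 0) with hψdef
  have hψsol : IsSolution f ⊤ ψ := ⟨EReal.zero_lt_top, shiftSol hφsol.2 t0 ht00⟩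
  have hψ0 : ψ 0 = φ t0 := by
    simp only [hψdef, max_self, add_zero]
  have hψMe : ψ 0 ∈ Me := by
    rw [hψ0]
    exact hMeInv ⊤ φ hφsol hφMe t0 ht00 (EReal.coe_lt_top _)
  have hψn : ‖ψ 0‖ < Δ₀ := by
    rw [hψ0]
    have := hRK₀ _ (hKmem t0 ht00)
    simp only [id_eq] at this
    rw [hΔ₀def]; linarith
  have hψd : infDist (ψ 0) Mo < δη := by rw [hψ0]; exact ht0d
  have hψspec := hδηspec ⊤ ψ hψsol hψMe hψd hψn
  filter_upwards [eventually_ge_atTop t0] with t ht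
  have h1 := hψspec (t - t0) (by linarith) (EReal.coe_lt_top _)
  have h2 : ψ (t - t0) = φ t := by
    simp only [hψdef]
    rw [max_eq_left (by linarith : (0:ℝ) ≤ t - t0)]
    congr 1
    ring
  rw [h2] at h1
  rw [Real.dist_eq, sub_zero, abs_of_nonneg infDist_nonneg]
  exact h1
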